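/- Let G be a non-trivial topological group acting continuously, faithfully, locally decomposably and minimally by homeomorphisms on a compact zero-dimensional space X. Then the following are equivalent: (i) the action is non-discretely micro-supported; (ii) G has trivial quasicentre; (iii) G is not discrete. -/

import Mathlib

/-- The rigid stabiliser of `U ⊆ X` in `G`: elements acting trivially outside `U`. -/
def rist (G : Type*) {X : Type*} [Group G] [MulAction G X] (U : Set X) : Subgroup G where
  carrier := {g | ∀ x ∉ U, g • x = x}
  one_mem' := fun x _ => one_smul G x
  mul_mem' := fun {a b} ha hb x hx => by rw [mul_smul, hb x hx, ha x hx]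
  inv_mem' := fun {a} ha x hx => by
    have h2 : a⁻¹ • (a • x) = a⁻¹ • x := by rw [ha x hx]
    rw [inv_smul_smul] at h2
    exact h2.symm

/-- The action of the topological group `G` on `X` is locally decomposable: for every finite
clopen partition of `X`, the product of the rigid stabilisers of the parts is open in `G` and
carries the product topology, i.e. the multiplication map from the direct product of the
rigid stabilisers to `G` is an injective continuous open map. -/
def LocallyDecomposableSMul (G X : Type*) [Group G] [TopologicalSpace G]
    [TopologicalSpace X] [MulAction G X] : Prop :=
  ∀ (n : ℕ) (α : Fin n → Set X), (∀ i, IsClopen (α i)) →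
    Pairwise (Function.onFun Disjoint α) → (⋃ i, α i) = Set.univ →
    Function.Injective (fun f : (∀ i, rist G (α i)) => (List.ofFn fun i => ((f i : G))).prod) ∧
    Continuous (fun f : (∀ i, rist G (α i)) => (List.ofFn fun i => ((f i : G))).prod) ∧
    IsOpenMap (fun f : (∀ i, rist G (α i)) => (List.ofFn fun i => ((f i : G))).prod)

open Pointwise

section Aux

variable {G X : Type*} [Group G] [MulAction G X]

lemma rist_mono {U V : Set X} (h : U ⊆ V) : rist G U ≤ rist G V :=
  fun g hg x hx => hg x fun hxU => hx (h hxU)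

lemma rist_conj_mem {g h : G} {α : Set X} (hh : h ∈ rist G α) :
    g * h * g⁻¹ ∈ rist G (g • α) := by
  intro x hx
  have hx' : g⁻¹ • x ∉ α := by
    intro hmem
    exact hx ⟨g⁻¹ • x, hmem, by simp⟩
  have hfix := hh _ hx'
  calc (g * h * g⁻¹) • x = g • h • g⁻¹ • x := by rw [mul_smul, mul_smul]
    _ = g • g⁻¹ • x := by rw [hfix]
    _ = x := smul_inv_smul g x

lemma isClopen_smul {X : Type*} [TopologicalSpace X] [MulAction G X]
    [ContinuousConstSMul G X] {s : Set X} (h : IsClopen s) (g : G) : IsClopen (g • s) :=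
  ⟨h.1.smul g, h.2.smul g⟩

variable [TopologicalSpace G]

lemma subgroup_discrete_iff {H : Subgroup G} :
    IsOpen ({1} : Set H) ↔ ∃ t : Set G, IsOpen t ∧ 1 ∈ t ∧ ∀ h ∈ H, h ∈ t → h = 1 := by
  rw [isOpen_induced_iff]
  constructor
  · rintro ⟨t, ht, heq⟩
    refine ⟨t, ht, ?_, ?_⟩
    · have : (1 : H) ∈ Subtype.val ⁻¹' t := by rw [heq]; rfl
      simpa using this
    · intro h hh hht
      have : (⟨h, hh⟩ : H) ∈ Subtype.val ⁻¹' t := hht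
      rw [heq] at this
      simpa [Subtype.ext_iff] using this
  · rintro ⟨t, ht, h1, hall⟩
    refine ⟨t, ht, ?_⟩
    ext ⟨h, hh⟩
    simp only [Set.mem_preimage, Set.mem_singleton_iff, Subtype.ext_iff, Subgroup.coe_one]
    exact ⟨fun hht => hall h hh hht, fun he => he ▸ h1⟩

lemma discrete_of_le {H K : Subgroup G} (hle : H ≤ K) (hK : IsOpen ({1} : Set K)) :
    IsOpen ({1} : Set H) := by
  rw [subgroup_discrete_iff] at hK ⊢
  obtain ⟨t, ht, h1, hall⟩ := hK
  exact ⟨t, ht, h1, fun h hh hht => hall h (hle hh) hht⟩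

lemma discrete_rist_smul [IsTopologicalGroup G] {α : Set X}
    (h : IsOpen ({1} : Set (rist G α))) (g : G) : IsOpen ({1} : Set (rist G (g • α))) := by
  rw [subgroup_discrete_iff] at h ⊢
  obtain ⟨t, ht, h1, hall⟩ := h
  refine ⟨(fun x => g⁻¹ * x * g) ⁻¹' t,
    ht.preimage ((continuous_const.mul continuous_id).mul continuous_const), by simpa using h1, ?_⟩
  intro h hmem hmt
  have hmem' : g⁻¹ * h * (g⁻¹)⁻¹ ∈ rist G (g⁻¹ • g • α) := rist_conj_mem hmem
  rw [inv_smul_smul, inv_inv] at hmem'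
  have heq : g⁻¹ * h * g = 1 := hall _ hmem' hmt
  have h2 : h = g * (g⁻¹ * h * g) * g⁻¹ := by group
  rw [heq] at h2
  simpa using h2

end Aux

theorem discrete_of_rist_discrete
    {G X : Type*} [Group G] [TopologicalSpace G] [IsTopologicalGroup G]
    [TopologicalSpace X] [CompactSpace X]
    [MulAction G X] [ContinuousSMul G X]
    (hld : LocallyDecomposableSMul G X)
    (hmin : ∀ x : X, Dense (MulAction.orbit G x))
    {α : Set X} (hα : IsClopen α) (hne : α.Nonempty)
    (hdisc : IsOpen ({1} : Set (rist G α))) : IsOpen ({1} : Set G) := by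
  classical
  have hcover : (Set.univ : Set X) ⊆ ⋃ g : G, g • α := by
    intro y _
    obtain ⟨z, hz, hzα⟩ := (hmin y).exists_mem_open hα.2 hne
    obtain ⟨g, rfl⟩ := MulAction.mem_orbit_iff.mp hz
    exact Set.mem_iUnion.mpr ⟨g⁻¹, ⟨g • y, hzα, inv_smul_smul g y⟩⟩
  obtain ⟨t, ht⟩ := IsCompact.elim_finite_subcover isCompact_univ (fun g : G => g • α)
      (fun g => hα.2.smul g) hcover
  set n := t.card with hn
  set e : Fin n → G := fun i => (t.equivFin.symm i : G) with he
  have hcov' : ∀ x : X, ∃ i : Fin n, x ∈ e i • α := by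
    intro x
    obtain ⟨g, hg, hx⟩ := Set.mem_iUnion₂.mp (ht (Set.mem_univ x))
    refine ⟨t.equivFin ⟨g, hg⟩, ?_⟩
    simpa [he, Equiv.symm_apply_apply] using hx
  set β : Fin n → Set X := fun i => (e i • α) \ ⋃ j ∈ Finset.Iio i, e j • α with hβ
  have hβclopen : ∀ i, IsClopen (β i) :=
    fun i => (isClopen_smul hα (e i)).diff
      (isClopen_biUnion_finset fun j _ => isClopen_smul hα (e j))
  have hdisj : Pairwise (Function.onFun Disjoint β) := by
    intro i j hij
    rcases hij.lt_or_gt with h | h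
    · refine Set.disjoint_left.mpr fun x hxi hxj => ?_
      exact hxj.2 (Set.mem_iUnion₂.mpr ⟨i, Finset.mem_Iio.mpr h, hxi.1⟩)
    · refine Set.disjoint_left.mpr fun x hxi hxj => ?_
      exact hxi.2 (Set.mem_iUnion₂.mpr ⟨j, Finset.mem_Iio.mpr h, hxj.1⟩)
  have hunion : (⋃ i, β i) = Set.univ := by
    apply Set.eq_univ_of_forall
    intro x
    have hnonempty : (Finset.univ.filter fun i : Fin n => x ∈ e i • α).Nonempty := by
      obtain ⟨i, hi⟩ := hcov' x
      exact ⟨i, Finset.mem_filter.mpr ⟨Finset.mem_univ _, hi⟩⟩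
    set i := (Finset.univ.filter fun i : Fin n => x ∈ e i • α).min' hnonempty with hidef
    have hxi : x ∈ e i • α :=
      (Finset.mem_filter.mp (Finset.min'_mem _ hnonempty)).2
    refine Set.mem_iUnion.mpr ⟨i, hxi, fun hmem => ?_⟩
    obtain ⟨j, hj, hxj⟩ := Set.mem_iUnion₂.mp hmem
    have hji : j < i := Finset.mem_Iio.mp hj
    have hij : i ≤ j := Finset.min'_le _ j (Finset.mem_filter.mpr ⟨Finset.mem_univ _, hxj⟩)
    exact absurd hji (not_lt.mpr hij)
  obtain ⟨-, -, hopen⟩ := hld n β hβclopen hdisj hunion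
  have hdiscβ : ∀ i, IsOpen ({1} : Set (rist G (β i))) := fun i =>
    discrete_of_le (rist_mono Set.diff_subset) (discrete_rist_smul hdisc (e i))
  have hopenpt : IsOpen ({fun _ => 1} : Set (∀ i, rist G (β i))) := by
    rw [← Set.univ_pi_singleton]
    exact isOpen_set_pi Set.finite_univ fun i _ => hdiscβ i
  have himg := hopen _ hopenpt
  rw [Set.image_singleton] at himg
  simpa [List.ofFn_const] using himg

theorem qz_of_ms {G X : Type*} [Group G] [TopologicalSpace G] [IsTopologicalGroup G]
    [TopologicalSpace X] [CompactSpace X] [T2Space X] [TotallyDisconnectedSpace X]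
    [MulAction G X] [ContinuousSMul G X] [FaithfulSMul G X]
    (hms : ∀ α : Set X, IsClopen α → α.Nonempty → ¬ IsOpen ({1} : Set (rist G α)))
    (g : G) (hg : IsOpen ((Subgroup.centralizer {g} : Subgroup G) : Set G)) : g = 1 := by
  by_contra hg1
  have hex : ∃ x : X, g • x ≠ x := by
    by_contra h
    push_neg at h
    exact hg1 (eq_of_smul_eq_smul (M := G) (α := X) fun x : X => by rw [h x, one_smul])
  obtain ⟨x, hx⟩ := hex
  have : TotallySeparatedSpace X := loc_compact_t2_tot_disc_iff_tot_sep.mp ‹_›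
  obtain ⟨V, hV, hxV, hgxV⟩ := exists_isClopen_of_totally_separated (Ne.symm hx)
  set α : Set X := V \ g⁻¹ • V with hαdef
  have hαclopen : IsClopen α := hV.diff (isClopen_smul hV g⁻¹)
  have hxα : x ∈ α := by
    refine ⟨hxV, fun hmem => hgxV ?_⟩
    have := Set.mem_smul_set_iff_inv_smul_mem.mp hmem
    simpa using this
  have hdisj : ∀ y ∈ α, g • y ∉ α := by
    intro y hy hgy
    exact hy.2 (Set.mem_smul_set_iff_inv_smul_mem.mpr (by simpa using hgy.1))
  refine hms α hαclopen ⟨x, hxα⟩ ?_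
  rw [subgroup_discrete_iff]
  refine ⟨(Subgroup.centralizer {g} : Subgroup G), hg, Subgroup.one_mem _, ?_⟩
  intro h hh hc
  have hcg : g * h = h * g :=
    (Subgroup.mem_centralizer_iff.mp hc) g (Set.mem_singleton g)
  have hcomm : g * h * g⁻¹ = h := by rw [hcg]; group
  have hgα : h ∈ rist G (g • α) := hcomm ▸ rist_conj_mem hh
  apply eq_of_smul_eq_smul (M := G) (α := X)
  intro y
  rw [one_smul]
  by_cases hy : y ∈ α
  · refine hgα y fun hmem => ?_
    obtain ⟨z, hz, rfl⟩ := hmem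
    exact hdisj z hz hy
  · exact hh y hy

/-- **Non-discreteness criteria for locally decomposable minimal actions.**
Let `G` be a non-trivial topological group acting continuously, faithfully, locally
decomposably and minimally on a compact zero-dimensional space `X`.  Then the following are
equivalent: (i) the action is non-discretely micro-supported (no rigid stabiliser of a
nonempty clopen set is discrete); (ii) `G` has trivial quasicentre (no non-trivial element
has open centraliser); (iii) `G` is not discrete. -/
theorem nondiscretely_microsupported_iff_trivial_quasicentre_iff_nondiscrete
    {G X : Type*} [Group G] [TopologicalSpace G] [IsTopologicalGroup G] [Nontrivial G]
    [TopologicalSpace X] [CompactSpace X] [T2Space X] [TotallyDisconnectedSpace X]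
    [MulAction G X] [ContinuousSMul G X] [FaithfulSMul G X]
    (hld : LocallyDecomposableSMul G X)
    (hmin : ∀ x : X, Dense (MulAction.orbit G x)) :
    ((∀ α : Set X, IsClopen α → α.Nonempty → ¬ IsOpen ({1} : Set (rist G α))) ↔
      (∀ g : G, IsOpen ((Subgroup.centralizer {g} : Subgroup G) : Set G) → g = 1)) ∧
    ((∀ g : G, IsOpen ((Subgroup.centralizer {g} : Subgroup G) : Set G) → g = 1) ↔
      ¬ IsOpen ({1} : Set G)) := by
  have hPQ : (∀ α : Set X, IsClopen α → α.Nonempty → ¬ IsOpen ({1} : Set (rist G α))) →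
      (∀ g : G, IsOpen ((Subgroup.centralizer {g} : Subgroup G) : Set G) → g = 1) :=
    fun hms g hg => qz_of_ms hms g hg
  have hQR : (∀ g : G, IsOpen ((Subgroup.centralizer {g} : Subgroup G) : Set G) → g = 1) →
      ¬ IsOpen ({1} : Set G) := by
    intro hq hopen
    obtain ⟨g, hg⟩ := exists_ne (1 : G)
    refine hg (hq g (Subgroup.isOpen_of_mem_nhds (g := (1:G)) _ ?_))
    refine Filter.mem_of_superset (hopen.mem_nhds rfl) ?_
    intro y hy
    rw [Set.mem_singleton_iff] at hy
    subst hy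
    exact Subgroup.one_mem _
  have hRP : ¬ IsOpen ({1} : Set G) →
      (∀ α : Set X, IsClopen α → α.Nonempty → ¬ IsOpen ({1} : Set (rist G α))) :=
    fun hnd α hcl hne hdisc => hnd (discrete_of_rist_discrete hld hmin hcl hne hdisc)
  exact ⟨⟨hPQ, fun q => hRP (hQR q)⟩, ⟨hQR, fun r => hPQ (hRP r)⟩⟩
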